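/- Let f(x) = a₀ + Σ_{k=1}^{n} (aₖ cos kx + bₖ sin kx) be a real trigonometric polynomial of degree n (with aₙ² + bₙ² ≠ 0) having exactly 2n distinct real zeros in the period [0, 2π). Then its derivative f' is again a trigonometric polynomial of degree n and also has exactly 2n distinct real zeros in [0, 2π). -/

import Mathlib

open Set Real Polynomial

lemma exp_I_injOn : Set.InjOn (fun x : ℝ => Complex.exp (x * Complex.I)) (Set.Ico 0 (2*π)) := by
  intro x hx y hy hxy
  simp only at hxy
  have h1 : Complex.exp ((x - y : ℝ) * Complex.I) = 1 := by
    rw [Complex.ofReal_sub, sub_mul, Complex.exp_sub, hxy, div_self (Complex.exp_ne_zero _)]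
  rw [Complex.exp_eq_one_iff] at h1
  obtain ⟨k, hk⟩ := h1
  have hI : ((x - y : ℝ) : ℂ) = k * (2 * π) := by
    have h2 : ((x - y : ℝ) : ℂ) * Complex.I = (k * (2 * π)) * Complex.I := by
      rw [hk]; ring
    exact mul_right_cancel₀ Complex.I_ne_zero h2
  have hr : (x - y : ℝ) = (k : ℝ) * (2 * π) := by exact_mod_cast hI
  have hpi := Real.pi_pos
  have hk0 : k = 0 := by
    rcases lt_trichotomy k 0 with h | h | h
    · exfalso
      have : (k:ℝ) ≤ -1 := by exact_mod_cast (by omega : k ≤ -1)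
      nlinarith [hx.1, hx.2, hy.1, hy.2]
    · exact h
    · exfalso
      have : (1:ℝ) ≤ (k:ℝ) := by exact_mod_cast h
      nlinarith [hx.1, hx.2, hy.1, hy.2]
  rw [hk0] at hr; simp at hr; linarith

noncomputable def trigP (n : ℕ) (c d : ℕ → ℝ) : Polynomial ℂ :=
  Polynomial.C (2 * c 0 : ℂ) * Polynomial.X ^ n +
    ∑ k ∈ Finset.Icc 1 n,
      (Polynomial.C ((c k : ℂ) - (d k : ℂ) * Complex.I) * Polynomial.X ^ (n + k) +
       Polynomial.C ((c k : ℂ) + (d k : ℂ) * Complex.I) * Polynomial.X ^ (n - k))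

lemma trigP_eval (n : ℕ) (c d : ℕ → ℝ) (x : ℝ) :
    (trigP n c d).eval (Complex.exp (x * Complex.I)) =
      2 * Complex.exp ((n : ℂ) * x * Complex.I) *
        ((c 0 : ℂ) + ∑ k ∈ Finset.Icc 1 n,
          ((c k : ℂ) * Real.cos (k * x) + (d k : ℂ) * Real.sin (k * x))) := by
  simp only [trigP, eval_add, eval_mul, eval_pow, eval_C, eval_X, eval_finset_sum, mul_add,
    Finset.mul_sum]
  congr 1
  · rw [← Complex.exp_nat_mul]; ring_nf
  · apply Finset.sum_congr rfl
    intro k hk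
    have hk' : k ≤ n := (Finset.mem_Icc.mp hk).2
    have e1 : Complex.exp (x * Complex.I) ^ (n + k) =
        Complex.exp ((n : ℂ) * x * Complex.I) * Complex.exp ((k : ℂ) * x * Complex.I) := by
      rw [← Complex.exp_nat_mul, ← Complex.exp_add]; push_cast; ring_nf
    have e2 : Complex.exp (x * Complex.I) ^ (n - k) *
          Complex.exp ((k : ℂ) * x * Complex.I) = Complex.exp ((n : ℂ) * x * Complex.I) := by
      rw [← Complex.exp_nat_mul, ← Complex.exp_add]
      congr 1
      have : ((n - k : ℕ) : ℂ) = (n : ℂ) - k := by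
        push_cast [Nat.cast_sub hk']; ring
      rw [this]; ring
    have ecs : Complex.exp ((k : ℂ) * x * Complex.I) =
        (Real.cos (k * x) : ℂ) + (Real.sin (k * x) : ℂ) * Complex.I := by
      rw [show ((k : ℂ) * x * Complex.I) = ((k * x : ℝ) : ℂ) * Complex.I by push_cast; ring,
        Complex.exp_mul_I]
      push_cast [Complex.cos_ofReal_re, Complex.sin_ofReal_re]
      simp [Complex.ofReal_cos, Complex.ofReal_sin]
    have ecs' : Complex.exp (-((k : ℂ) * x * Complex.I)) =
        (Real.cos (k * x) : ℂ) - (Real.sin (k * x) : ℂ) * Complex.I := by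
      rw [show (-((k : ℂ) * x * Complex.I)) = ((-(k * x) : ℝ) : ℂ) * Complex.I by push_cast; ring,
        Complex.exp_mul_I]
      simp [← Complex.ofReal_cos, ← Complex.ofReal_sin, Real.cos_neg, Real.sin_neg]
      rw [Complex.ofReal_cos, Complex.ofReal_sin]
      push_cast
      ring
    rw [e1]
    have e2' : Complex.exp (x * Complex.I) ^ (n - k) =
        Complex.exp ((n : ℂ) * x * Complex.I) * Complex.exp (-((k : ℂ) * x * Complex.I)) := by
      rw [← e2, Complex.exp_neg]; field_simp
    rw [e2', ecs, ecs']
    ring_nf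
    rw [Complex.I_sq]
    ring

lemma trigP_natDegree_le (n : ℕ) (c d : ℕ → ℝ) : (trigP n c d).natDegree ≤ 2 * n := by
  apply le_trans (natDegree_add_le _ _)
  apply max_le
  · exact le_trans (natDegree_C_mul_le _ _) (by simp [natDegree_X_pow]; omega)
  · apply natDegree_sum_le_of_forall_le
    intro k hk
    have hk' : k ≤ n := (Finset.mem_Icc.mp hk).2
    apply le_trans (natDegree_add_le _ _)
    apply max_le <;>
      exact le_trans (natDegree_C_mul_le _ _) (by simp [natDegree_X_pow]; omega)

lemma trigP_coeff (n : ℕ) (hn : 0 < n) (c d : ℕ → ℝ) :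
    (trigP n c d).coeff (2 * n) = (c n : ℂ) - (d n : ℂ) * Complex.I := by
  simp only [trigP, coeff_add, coeff_C_mul, coeff_X_pow, finset_sum_coeff]
  have hstep : ∀ k ∈ Finset.Icc 1 n,
      (((c k : ℂ) - (d k : ℂ) * Complex.I) * (if 2 * n = n + k then 1 else 0) +
       ((c k : ℂ) + (d k : ℂ) * Complex.I) * (if 2 * n = n - k then 1 else 0)) =
      (if n = k then ((c k : ℂ) - (d k : ℂ) * Complex.I) else 0) := by
    intro k hk
    obtain ⟨h1, h2⟩ := Finset.mem_Icc.mp hk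
    have e1 : (2 * n = n + k) ↔ (n = k) := by omega
    have e2 : ¬ (2 * n = n - k) := by omega
    simp [e1, e2]
  rw [Finset.sum_congr rfl hstep, Finset.sum_ite_eq (Finset.Icc 1 n) n
    (fun k => ((c k : ℂ) - (d k : ℂ) * Complex.I))]
  rw [if_pos (Finset.mem_Icc.mpr ⟨hn, le_refl n⟩), if_neg (by omega : ¬ 2 * n = n),
    mul_zero, zero_add]

lemma trig_zeros_le (n : ℕ) (hn : 0 < n) (c d : ℕ → ℝ) (g : ℝ → ℝ)
    (hg : ∀ x, g x = c 0 + ∑ k ∈ Finset.Icc 1 n,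
      (c k * Real.cos (k * x) + d k * Real.sin (k * x)))
    (hlead : c n ^ 2 + d n ^ 2 ≠ 0) :
    {x ∈ Set.Ico (0:ℝ) (2*π) | g x = 0}.encard ≤ ((2 * n : ℕ) : ℕ∞) := by
  set P := trigP n c d with hP
  have hcoeff : P.coeff (2 * n) = (c n : ℂ) - (d n : ℂ) * Complex.I := trigP_coeff n hn c d
  have hlead' : (c n : ℂ) - (d n : ℂ) * Complex.I ≠ 0 := by
    intro h
    rw [Complex.ext_iff] at h
    simp at h
    apply hlead
    rw [h.1, h.2]; ring
  have hP0 : P ≠ 0 := fun h => hlead' (by rw [← hcoeff, h, coeff_zero])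
  set S := {x ∈ Set.Ico (0:ℝ) (2*π) | g x = 0} with hS
  set φ : ℝ → ℂ := fun x => Complex.exp (x * Complex.I) with hφ
  have hroot : ∀ x ∈ S, φ x ∈ P.roots.toFinset := by
    intro x hx
    rw [Multiset.mem_toFinset, mem_roots hP0]
    have hzero : ((c 0 : ℂ) + ∑ k ∈ Finset.Icc 1 n,
        ((c k : ℂ) * Real.cos (k * x) + (d k : ℂ) * Real.sin (k * x))) = 0 := by
      have := hg x
      rw [hx.2] at this
      have : ((0:ℝ):ℂ) = ((c 0 + ∑ k ∈ Finset.Icc 1 n,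
          (c k * Real.cos (k * x) + d k * Real.sin (k * x)) : ℝ) : ℂ) := by rw [← this]
      push_cast at this ⊢
      exact this.symm
    show P.IsRoot (φ x)
    rw [IsRoot, hφ]
    simp only
    rw [trigP_eval n c d x, hzero, mul_zero]
  have hinj : Set.InjOn φ S := fun x hx y hy h =>
    exp_I_injOn hx.1 hy.1 h
  calc S.encard = (φ '' S).encard := (Set.InjOn.encard_image hinj).symm
    _ ≤ (↑P.roots.toFinset : Set ℂ).encard := Set.encard_le_encard (Set.image_subset_iff.mpr hroot)
    _ = (P.roots.toFinset.card : ℕ∞) := Set.encard_coe_eq_coe_finsetCard _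
    _ ≤ ((2 * n : ℕ) : ℕ∞) := by
        norm_cast
        exact le_trans (Multiset.toFinset_card_le _)
          (le_trans (Polynomial.card_roots' P) (trigP_natDegree_le n c d))

/-- If a real trigonometric polynomial `f` of degree `n ≥ 1` (so
`aₙ² + bₙ² ≠ 0`) has exactly `2n` distinct real zeros in `[0, 2π)`, then its
derivative `f'` is again a trigonometric polynomial of degree `n` and also has
exactly `2n` distinct real zeros in `[0, 2π)`. -/
theorem deriv_trig_poly_max_zeros
    (n : ℕ) (hn : 0 < n) (a b : ℕ → ℝ) (f : ℝ → ℝ)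
    (hf : ∀ x : ℝ, f x = a 0 + ∑ k ∈ Finset.Icc 1 n,
      (a k * Real.cos (k * x) + b k * Real.sin (k * x)))
    (htop : a n ^ 2 + b n ^ 2 ≠ 0)
    (hzeros : {x ∈ Set.Ico (0 : ℝ) (2 * π) | f x = 0}.encard = ((2 * n : ℕ) : ℕ∞)) :
    ∃ c d : ℕ → ℝ,
      (∀ x : ℝ, deriv f x = c 0 + ∑ k ∈ Finset.Icc 1 n,
        (c k * Real.cos (k * x) + d k * Real.sin (k * x))) ∧
      c n ^ 2 + d n ^ 2 ≠ 0 ∧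
      {x ∈ Set.Ico (0 : ℝ) (2 * π) | deriv f x = 0}.encard = ((2 * n : ℕ) : ℕ∞) := by
  set c : ℕ → ℝ := fun k => (k : ℝ) * b k with hc
  set d : ℕ → ℝ := fun k => -((k : ℝ) * a k) with hd
  -- derivative formula
  have hD : ∀ x : ℝ, HasDerivAt f
      (∑ k ∈ Finset.Icc 1 n, (c k * Real.cos (k * x) + d k * Real.sin (k * x))) x := by
    intro x
    have hfe : f = fun x => a 0 + ∑ k ∈ Finset.Icc 1 n,
        (a k * Real.cos (k * x) + b k * Real.sin (k * x)) := funext hf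
    rw [hfe]
    have H : HasDerivAt (fun x : ℝ => a 0 + ∑ k ∈ Finset.Icc 1 n,
        (a k * Real.cos (k * x) + b k * Real.sin (k * x)))
        (0 + ∑ k ∈ Finset.Icc 1 n,
          (a k * (-Real.sin ((k:ℝ) * x) * ((k:ℝ) * 1)) +
           b k * (Real.cos ((k:ℝ) * x) * ((k:ℝ) * 1)))) x := by
      apply HasDerivAt.add (hasDerivAt_const x (a 0))
      apply HasDerivAt.fun_sum
      intro k hk
      exact (((hasDerivAt_id x).const_mul (k:ℝ)).cos.const_mul (a k)).add
        (((hasDerivAt_id x).const_mul (k:ℝ)).sin.const_mul (b k))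
    convert H using 1
    rw [zero_add]
    apply Finset.sum_congr rfl
    intro k _
    simp only [hc, hd]
    ring
  have hderiv : ∀ x : ℝ, deriv f x = c 0 + ∑ k ∈ Finset.Icc 1 n,
      (c k * Real.cos (k * x) + d k * Real.sin (k * x)) := by
    intro x
    rw [(hD x).deriv, hc]
    simp
  have hlead : c n ^ 2 + d n ^ 2 ≠ 0 := by
    intro h
    apply htop
    have hne : ((n : ℝ))^2 ≠ 0 := by positivity
    have : ((n:ℝ))^2 * (a n ^ 2 + b n ^ 2) = c n ^ 2 + d n ^ 2 := by
      simp only [hc, hd]; ring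
    rw [h] at this
    exact (mul_eq_zero.mp this).resolve_left hne
  -- continuity, periodicity
  have hcont : Continuous f := by
    have : Differentiable ℝ f := fun x => (hD x).differentiableAt
    exact this.continuous
  have hper : ∀ x : ℝ, f (x + 2 * π) = f x := by
    intro x
    rw [hf, hf]
    congr 1
    apply Finset.sum_congr rfl
    intro k _
    have hcos := Real.cos_add_int_mul_two_pi ((k:ℝ) * x) (k:ℤ)
    have hsin := Real.sin_add_int_mul_two_pi ((k:ℝ) * x) (k:ℤ)
    have e2 : (k:ℝ) * x + ((k:ℤ) : ℝ) * (2 * π) = (k:ℝ) * (x + 2 * π) := by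
      push_cast; ring
    rw [e2] at hcos hsin
    rw [hcos, hsin]
  have hdper : ∀ x : ℝ, deriv f (x - 2 * π) = deriv f x := by
    intro x
    rw [hderiv, hderiv]
    congr 1
    apply Finset.sum_congr rfl
    intro k _
    have hcos := Real.cos_add_int_mul_two_pi ((k:ℝ) * x) (-(k:ℤ))
    have hsin := Real.sin_add_int_mul_two_pi ((k:ℝ) * x) (-(k:ℤ))
    have e2 : (k:ℝ) * x + ((-(k:ℤ) : ℤ) : ℝ) * (2 * π) = (k:ℝ) * (x - 2 * π) := by
      push_cast; ring
    rw [e2] at hcos hsin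
    rw [hcos, hsin]
  -- lower bound via Rolle
  set N := 2 * n with hN
  have hN2 : 2 ≤ N := by omega
  set Z := {x ∈ Set.Ico (0:ℝ) (2*π) | f x = 0} with hZ
  have hfin : Z.Finite := Set.finite_of_encard_eq_coe hzeros
  have hcard : hfin.toFinset.card = N := by
    have h1 := hfin.encard_eq_coe_toFinset_card
    rw [hzeros] at h1
    exact_mod_cast h1.symm
  set e := hfin.toFinset.orderIsoOfFin hcard with he
  set E : Fin N → ℝ := fun i => (e i : ℝ) with hE
  have hEmono : StrictMono E := fun i j h => Subtype.coe_lt_coe.mpr (e.strictMono h)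
  have hEZ : ∀ i, E i ∈ Set.Ico (0:ℝ) (2*π) ∧ f (E i) = 0 := by
    intro i
    have h1 : (e i : ℝ) ∈ Z := hfin.mem_toFinset.mp (e i).2
    exact h1
  set i0 : Fin N := ⟨0, by omega⟩ with hi0
  set iL : Fin N := ⟨N-1, by omega⟩ with hiL
  have hP : ∀ i : Fin N, ∃ y, (y ∈ Set.Ico (0:ℝ) (2*π) ∧ deriv f y = 0) ∧
      (if h : (i:ℕ)+1 < N then E i < y ∧ y < E ⟨(i:ℕ)+1, h⟩
       else (y < E i0 ∨ E iL < y)) := by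
    intro i
    by_cases h : (i:ℕ)+1 < N
    · have hab : E i < E ⟨(i:ℕ)+1, h⟩ := hEmono (by simp [Fin.lt_def])
      obtain ⟨y, hy, hdy⟩ := exists_deriv_eq_zero hab hcont.continuousOn
        (by rw [(hEZ i).2, (hEZ _).2])
      refine ⟨y, ⟨⟨le_of_lt (lt_of_le_of_lt (hEZ i).1.1 hy.1),
        lt_trans hy.2 (hEZ _).1.2⟩, hdy⟩, ?_⟩
      rw [dif_pos h]
      exact hy
    · have hab : E iL < E i0 + 2*π :=
        lt_of_lt_of_le (hEZ iL).1.2 (by linarith [(hEZ i0).1.1])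
      obtain ⟨y, hy, hdy⟩ := exists_deriv_eq_zero hab hcont.continuousOn
        (by rw [hper (E i0), (hEZ iL).2, (hEZ i0).2])
      by_cases hy2 : y < 2*π
      · refine ⟨y, ⟨⟨le_of_lt (lt_of_le_of_lt (hEZ iL).1.1 hy.1), hy2⟩, hdy⟩, ?_⟩
        rw [dif_neg h]
        exact Or.inr hy.1
      · refine ⟨y - 2*π, ⟨⟨by linarith, ?_⟩, by rw [hdper]; exact hdy⟩, ?_⟩
        · have h1 : y < E i0 + 2*π := hy.2
          have h2 := (hEZ i0).1.2
          linarith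
        · rw [dif_neg h]
          left
          have h1 : y < E i0 + 2*π := hy.2
          linarith
  choose g hg hgP using hP
  have key : ∀ i j : Fin N, i < j → g i ≠ g j := by
    intro i j hij
    have hjN := j.2
    have hi : (i:ℕ)+1 < N := by
      have := Fin.lt_def.mp hij; omega
    have hPi := hgP i
    rw [dif_pos hi] at hPi
    by_cases hj : (j:ℕ)+1 < N
    · have hPj := hgP j
      rw [dif_pos hj] at hPj
      have hle : E ⟨(i:ℕ)+1, hi⟩ ≤ E j := hEmono.monotone (by
        rw [Fin.le_def]; simp; have := Fin.lt_def.mp hij; omega)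
      exact ne_of_lt (lt_trans (lt_of_lt_of_le hPi.2 hle) hPj.1)
    · have hPj := hgP j
      rw [dif_neg hj] at hPj
      have h1 : E i0 ≤ E i := hEmono.monotone (by rw [Fin.le_def]; simp [hi0])
      have h2 : E ⟨(i:ℕ)+1, hi⟩ ≤ E iL := hEmono.monotone (by
        rw [Fin.le_def]; simp [hiL]; have := Fin.lt_def.mp hij; omega)
      rcases hPj with hcase | hcase
      · exact ne_of_gt (by linarith [hPi.1])
      · exact ne_of_lt (by linarith [hPi.2])
  have ginj : Function.Injective g := by
    intro i j hgij
    by_contra hne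
    rcases lt_trichotomy i j with h|h|h
    · exact key i j h hgij
    · exact hne h
    · exact (key j i h hgij.symm)
  set Z' := {x ∈ Set.Ico (0:ℝ) (2*π) | deriv f x = 0} with hZ'
  have hub : Z'.encard ≤ ((2 * n : ℕ) : ℕ∞) :=
    trig_zeros_le n hn c d (deriv f) hderiv hlead
  have hlb : ((2 * n : ℕ) : ℕ∞) ≤ Z'.encard := by
    classical
    have hsub : ↑(Finset.univ.image g) ⊆ Z' := by
      intro y hy
      rw [Finset.coe_image] at hy
      obtain ⟨i, _, rfl⟩ := hy
      exact hg i
    have hcardT : (Finset.univ.image g).card = N := by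
      rw [Finset.card_image_of_injective _ ginj, Finset.card_univ, Fintype.card_fin]
    calc ((2 * n : ℕ) : ℕ∞) = ((Finset.univ.image g).card : ℕ∞) := by rw [hcardT]
      _ = (↑(Finset.univ.image g) : Set ℝ).encard := (Set.encard_coe_eq_coe_finsetCard _).symm
      _ ≤ Z'.encard := Set.encard_le_encard hsub
  exact ⟨c, d, hderiv, hlead, le_antisymm hub hlb⟩
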